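/- Let P=(x₁,y₁) be a point on the generalized Hessian curve E with x₁³ ≠ y₁³, and let [2]P = (x₃,y₃) be given by the doubling formula. Set r = x₁ + y₁. If 2r³ + d·r² − a ≠ 0, then x₃ + y₃ = −(r⁴ + 4a·r + a·d)/(2r³ + d·r² − a). -/

import Mathlib

/-- Doubling for the degree-2 compression `f₂(x,y) = x + y` on the
generalized Hessian curve `x³ + y³ + a = d·x·y`. -/
theorem genHessian_deg2_doubling {K : Type*} [Field K] (a d : K)
    (hchar2 : (2 : K) ≠ 0) (hchar3 : (3 : K) ≠ 0)
    (ha : a ≠ 0) (hd : d ^ 3 ≠ 27 * a)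
    (x1 y1 x3 y3 : K)
    (hP : x1 ^ 3 + y1 ^ 3 + a = d * x1 * y1)
    (hden : x1 ^ 3 ≠ y1 ^ 3)
    (hx3 : x3 = y1 * (a - x1 ^ 3) / (x1 ^ 3 - y1 ^ 3))
    (hy3 : y3 = x1 * (y1 ^ 3 - a) / (x1 ^ 3 - y1 ^ 3))
    (r : K) (hr : r = x1 + y1)
    (hM0 : 2 * r ^ 3 + d * r ^ 2 - a ≠ 0) :
    x3 + y3 = -(r ^ 4 + 4 * a * r + a * d) / (2 * r ^ 3 + d * r ^ 2 - a) := by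
  have hD : x1 ^ 3 - y1 ^ 3 ≠ 0 := sub_ne_zero.mpr hden
  subst hx3 hy3 hr
  rw [← add_div, div_eq_div_iff hD hM0]
  linear_combination ((x1 - y1) * ((x1 + y1) ^ 3 + a)) * hP
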